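/- Let D be a division ring, τ an automorphism of D of finite inner order with τ^m(d) = a^{−1}da for some a ∈ D, and let k be the smallest positive integer such that there is a non-zero b ∈ Z(D) with τ(ba^k) = ba^k. Then the center of R = D[t^{±1}; τ] is the ordinary Laurent polynomial ring K^τ[(ba^k t^{km})^{±1}], where K^τ is the subfield of Z(D) fixed by τ. -/

import Mathlib

namespace SkewLaurentAux

variable {D : Type} [DivisionRing D]

theorem ringAut_mul_apply (σ ρ : RingAut D) (d : D) : (σ * ρ) d = σ (ρ d) := rfl

theorem ringAut_one_apply (d : D) : (1 : RingAut D) d = d := rfl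

theorem commute_unit_zpow {M : Type} [Monoid M] {x : M} {u : Mˣ} (h : Commute x ↑u) :
    ∀ n : ℤ, Commute x ((u ^ n : Mˣ) : M) := by
  have hp : ∀ n : ℕ, Commute x ((u ^ n : Mˣ) : M) := by
    intro n; rw [Units.val_pow_eq_pow_val]; exact h.pow_right n
  intro n
  cases n with
  | ofNat n => rw [Int.ofNat_eq_coe, zpow_natCast]; exact hp n
  | negSucc n => rw [zpow_negSucc]; exact (hp (n + 1)).units_inv_right

theorem sandwich (x y d : D) : (x * y)⁻¹ * d * (x * y) = y⁻¹ * (x⁻¹ * d * x) * y := by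
  rw [mul_inv_rev]; simp [mul_assoc]

theorem conj_zpow (τ : RingAut D) (m : ℕ) (a : D) (ha : a ≠ 0)
    (hinner : ∀ d : D, (τ ^ m) d = a⁻¹ * d * a) :
    ∀ (q : ℤ) (d : D), (τ ^ ((m : ℤ) * q)) d = (a ^ q)⁻¹ * d * a ^ q := by
  have hmz : ∀ d : D, (τ ^ (m : ℤ)) d = a⁻¹ * d * a := by
    intro d; rw [zpow_natCast]; exact hinner d
  have hneg : ∀ d : D, (τ ^ (-(m : ℤ))) d = a * d * a⁻¹ := by
    intro d
    have h1 : (τ ^ (m : ℤ)) (a * d * a⁻¹) = d := by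
      rw [hmz]
      simp [mul_assoc, inv_mul_cancel_left₀ ha, mul_inv_cancel₀ ha, inv_mul_cancel₀ ha]
    have h2 := congrArg (τ ^ (-(m : ℤ)) : RingAut D) h1
    rw [← ringAut_mul_apply, ← zpow_add, neg_add_cancel, zpow_zero,
      ringAut_one_apply] at h2
    exact h2.symm
  intro q
  induction q using Int.induction_on with
  | zero => intro d; simp [ringAut_one_apply]
  | succ n ih =>
    intro d
    have h1 : (m : ℤ) * ((n : ℤ) + 1) = (m : ℤ) * n + (m : ℤ) := by ring
    rw [h1, zpow_add, ringAut_mul_apply, hmz, ih]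
    have h2 : a ^ ((n : ℤ) + 1) = a * a ^ (n : ℤ) := by
      rw [← zpow_one_add₀ ha, add_comm]
    rw [h2, sandwich]
  | pred n ih =>
    intro d
    have h1 : (m : ℤ) * (-(n : ℤ) - 1) = (m : ℤ) * (-(n : ℤ)) + -(m : ℤ) := by ring
    rw [h1, zpow_add, ringAut_mul_apply, hneg, ih]
    have h2 : a ^ (-(n : ℤ) - 1) = a⁻¹ * a ^ (-(n : ℤ)) := by
      rw [← zpow_neg_one, ← zpow_add₀ ha]; ring_nf
    rw [h2, sandwich, inv_inv]


theorem unit_pow_comm {R : Type} [Ring R] (φ : D →+* R) (u : Rˣ) (σ : RingAut D)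
    (h : ∀ d, (u : R) * φ d = φ (σ d) * u) :
    ∀ (n : ℕ) (d : D), ((u ^ n : Rˣ) : R) * φ d = φ ((σ ^ n) d) * ((u ^ n : Rˣ) : R) := by
  intro n
  induction n with
  | zero => intro d; simp only [pow_zero, Units.val_one, one_mul, mul_one]; rfl
  | succ n ih =>
    intro d
    have h1 : ((u ^ (n + 1) : Rˣ) : R) = ((u ^ n : Rˣ) : R) * (u : R) := by
      rw [pow_succ]; rfl
    rw [h1, mul_assoc, h d, ← mul_assoc, ih (σ d), mul_assoc]
    have h2 : (σ ^ (n + 1)) d = (σ ^ n) (σ d) := by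
      rw [pow_succ, ringAut_mul_apply]
    rw [h2]

theorem unit_zpow_comm {R : Type} [Ring R] (φ : D →+* R) (t : Rˣ) (τ : RingAut D)
    (hcomm : ∀ d, (t : R) * φ d = φ (τ d) * t) :
    ∀ (i : ℤ) (d : D), ((t ^ i : Rˣ) : R) * φ d = φ ((τ ^ i) d) * ((t ^ i : Rˣ) : R) := by
  have hinv : ∀ d, ((t⁻¹ : Rˣ) : R) * φ d = φ (τ⁻¹ d) * ((t⁻¹ : Rˣ) : R) := by
    intro d
    have h1 := hcomm (τ⁻¹ d)
    have h2 : τ (τ⁻¹ d) = d := τ.apply_symm_apply d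
    rw [h2] at h1
    calc ((t⁻¹ : Rˣ) : R) * φ d = ((t⁻¹ : Rˣ) : R) * (φ d * (t : R)) * ((t⁻¹ : Rˣ) : R) := by
          rw [mul_assoc, mul_assoc, Units.mul_inv, mul_one]
      _ = ((t⁻¹ : Rˣ) : R) * ((t : R) * φ (τ⁻¹ d)) * ((t⁻¹ : Rˣ) : R) := by rw [← h1]
      _ = φ (τ⁻¹ d) * ((t⁻¹ : Rˣ) : R) := by rw [← mul_assoc, Units.inv_mul, one_mul]
  intro i d
  cases i with
  | ofNat n =>
    rw [Int.ofNat_eq_coe, zpow_natCast, zpow_natCast]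
    exact unit_pow_comm φ t τ hcomm n d
  | negSucc n =>
    rw [zpow_negSucc, zpow_negSucc, ← inv_pow, ← inv_pow]
    exact unit_pow_comm φ t⁻¹ τ⁻¹ hinv (n + 1) d

theorem key_coeff (τ : RingAut D) (m : ℕ) (hm : 0 < m) (a : D) (ha : a ≠ 0)
    (hinner : ∀ d : D, (τ ^ m) d = a⁻¹ * d * a)
    (hmmin : ∀ j : ℕ, 0 < j → j < m →
      ¬ ∃ u : D, u ≠ 0 ∧ ∀ d : D, (τ ^ j) d = u⁻¹ * d * u)
    (k : ℕ) (hk : 0 < k) (b : D) (hb : b ∈ Set.center D) (hbne : b ≠ 0)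
    (hfix : τ (b * a ^ k) = b * a ^ k)
    (hkmin : ∀ j : ℕ, 0 < j → j < k →
      ¬ ∃ b' : D, b' ∈ Set.center D ∧ b' ≠ 0 ∧ τ (b' * a ^ j) = b' * a ^ j)
    (i : ℤ) (c : D) (hc : c ≠ 0) (hτc : τ c = c)
    (hrel : ∀ d : D, c * (τ ^ i) d = d * c) :
    ∃ (n : ℤ) (z : D), i = n * ((k * m : ℕ) : ℤ) ∧ z ∈ Set.center D ∧ τ z = z ∧ z ≠ 0 ∧
      c = z * (b * a ^ k) ^ n := by
  have hbd : ∀ g : D, Commute g b := fun g => Semigroup.mem_center_iff.mp hb g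
  have hmz : (0 : ℤ) < (m : ℤ) := by exact_mod_cast hm
  have hkz : (0 : ℤ) < (k : ℤ) := by exact_mod_cast hk
  set q : ℤ := i / (m : ℤ) with hqdef
  set j : ℤ := i % (m : ℤ) with hjdef
  have hij : i = (m : ℤ) * q + j := (Int.mul_ediv_add_emod i (m : ℤ)).symm
  have hj0 : 0 ≤ j := Int.emod_nonneg i (ne_of_gt hmz)
  have hjm : j < (m : ℤ) := Int.emod_lt_of_pos i hmz
  have haq : a ^ q ≠ 0 := zpow_ne_zero q ha
  have hu : ∀ d : D, (c * (a ^ q)⁻¹) * (τ ^ j) d = d * (c * (a ^ q)⁻¹) := by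
    intro d
    have h1 := hrel d
    rw [hij, zpow_add, ringAut_mul_apply, conj_zpow τ m a ha hinner q] at h1
    calc c * (a ^ q)⁻¹ * (τ ^ j) d
        = c * ((a ^ q)⁻¹ * (τ ^ j) d * a ^ q) * (a ^ q)⁻¹ := by
          simp [mul_assoc, mul_inv_cancel₀ haq]
      _ = d * c * (a ^ q)⁻¹ := by rw [h1]
      _ = d * (c * (a ^ q)⁻¹) := by rw [mul_assoc]
  have hune : c * (a ^ q)⁻¹ ≠ 0 := mul_ne_zero hc (inv_ne_zero haq)
  have hjz : j = 0 := by
    by_contra hne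
    have hj1 : 0 < j := lt_of_le_of_ne hj0 (Ne.symm hne)
    have hjn : ((j.toNat : ℤ)) = j := Int.toNat_of_nonneg hj0
    refine hmmin j.toNat (by omega) (by omega) ⟨c * (a ^ q)⁻¹, hune, ?_⟩
    intro d
    have h2 := hu d
    have h3 : (τ ^ j) d = (c * (a ^ q)⁻¹)⁻¹ * d * (c * (a ^ q)⁻¹) := by
      calc (τ ^ j) d = (c * (a ^ q)⁻¹)⁻¹ * ((c * (a ^ q)⁻¹) * (τ ^ j) d) :=
            (inv_mul_cancel_left₀ hune _).symm
        _ = (c * (a ^ q)⁻¹)⁻¹ * (d * (c * (a ^ q)⁻¹)) := by rw [h2]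
        _ = (c * (a ^ q)⁻¹)⁻¹ * d * (c * (a ^ q)⁻¹) := by rw [mul_assoc]
    rw [← zpow_natCast τ j.toNat, hjn]
    exact h3
  have hiq : i = (m : ℤ) * q := by rw [hij, hjz, add_zero]
  have hw : ∀ d : D, (c * (a ^ q)⁻¹) * d = d * (c * (a ^ q)⁻¹) := by
    intro d
    have h1 := hu d
    rwa [hjz, zpow_zero, ringAut_one_apply] at h1
  set w : D := c * (a ^ q)⁻¹ with hwdef
  have hcw : c = w * a ^ q := by
    rw [hwdef, mul_assoc, inv_mul_cancel₀ haq, mul_one]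
  -- second division
  set n : ℤ := q / (k : ℤ) with hndef
  set j' : ℤ := q % (k : ℤ) with hj'def
  have hq : q = (k : ℤ) * n + j' := (Int.mul_ediv_add_emod q (k : ℤ)).symm
  have hj'0 : 0 ≤ j' := Int.emod_nonneg q (ne_of_gt hkz)
  have hj'k : j' < (k : ℤ) := Int.emod_lt_of_pos q hkz
  have hbak : b * a ^ k ≠ 0 := mul_ne_zero hbne (pow_ne_zero k ha)
  set ua : Dˣ := Units.mk0 a ha with huadef
  set ub : Dˣ := Units.mk0 b hbne with hubdef
  set v : Dˣ := Units.mk0 (b * a ^ k) hbak with hvdef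
  have hva : v = ub * ua ^ k := by
    apply Units.ext
    simp [huadef, hubdef, hvdef]
  have hcomba : Commute ub ua := Units.ext ((hbd a).symm)
  have hcomv : Commute v ua := by
    rw [hva]
    exact hcomba.mul_left ((Commute.refl ua).pow_left k)
  have hv_n : ∀ nn : ℤ, v ^ nn = ub ^ nn * ua ^ ((k : ℤ) * nn) := by
    intro nn
    rw [hva, (hcomba.pow_right k).mul_zpow nn, ← zpow_natCast ua k, ← zpow_mul]
  have hdecomp : ua ^ q = ub ^ (-n) * v ^ n * ua ^ j' := by
    rw [hv_n n, ← mul_assoc, ← zpow_add ub, neg_add_cancel, zpow_zero, one_mul,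
      ← zpow_add ua, ← hq]
  have hvaq : ((ua ^ q : Dˣ) : D) = a ^ q := Units.val_zpow_eq_zpow_val ua q
  have hvubn : ((ub ^ (-n) : Dˣ) : D) = b ^ (-n) := Units.val_zpow_eq_zpow_val ub (-n)
  have hvvn : ((v ^ n : Dˣ) : D) = (b * a ^ k) ^ n := Units.val_zpow_eq_zpow_val v n
  have hvuaj : ((ua ^ j' : Dˣ) : D) = a ^ j' := Units.val_zpow_eq_zpow_val ua j'
  set z : D := w * ((ub ^ (-n) : Dˣ) : D) with hzdef
  have hzc : z ∈ Set.center D := by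
    rw [Semigroup.mem_center_iff]
    intro g
    have h1 : Commute g ((ub ^ (-n) : Dˣ) : D) :=
      commute_unit_zpow (show Commute g (ub : D) from hbd g) (-n)
    rw [hzdef, ← mul_assoc, ← hw g, mul_assoc, h1.eq, ← mul_assoc]
  have hcze : c = (z * ((ua ^ j' : Dˣ) : D)) * ((v ^ n : Dˣ) : D) := by
    have h2 : (ub ^ (-n) * v ^ n * ua ^ j' : Dˣ) = (ub ^ (-n) : Dˣ) * (ua ^ j' * v ^ n) := by
      rw [mul_assoc, (hcomv.zpow_zpow n j').eq]
    calc c = w * ((ua ^ q : Dˣ) : D) := by rw [hcw, hvaq]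
      _ = w * ((ub ^ (-n) * (ua ^ j' * v ^ n) : Dˣ) : D) := by rw [hdecomp, h2]
      _ = (z * ((ua ^ j' : Dˣ) : D)) * ((v ^ n : Dˣ) : D) := by
          rw [Units.val_mul, Units.val_mul, hzdef]; simp [mul_assoc]
  have hvne : ((v ^ n : Dˣ) : D) ≠ 0 := by rw [hvvn]; exact zpow_ne_zero n hbak
  have hfixn : τ (((v ^ n : Dˣ) : D)) = ((v ^ n : Dˣ) : D) := by
    rw [hvvn, map_zpow₀, hfix]
  have he : τ (z * ((ua ^ j' : Dˣ) : D)) = z * ((ua ^ j' : Dˣ) : D) := by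
    have h1 : τ c = τ (z * ((ua ^ j' : Dˣ) : D)) * ((v ^ n : Dˣ) : D) := by
      rw [hcze, map_mul, hfixn]
    rw [hτc, hcze] at h1
    exact (mul_right_cancel₀ hvne h1.symm)
  have hzne : z ≠ 0 := by
    intro h0
    apply hc
    rw [hcze, h0, zero_mul, zero_mul]
  by_cases hj'zero : j' = 0
  · refine ⟨n, z, ?_, hzc, ?_, hzne, ?_⟩
    · rw [hiq, hq, hj'zero]; push_cast; ring
    · have := he
      rwa [hj'zero, zpow_zero, Units.val_one, mul_one] at this
    · rw [hcze, hj'zero, zpow_zero, Units.val_one, mul_one, hvvn]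
  · exfalso
    have hj'1 : 0 < j' := lt_of_le_of_ne hj'0 (Ne.symm hj'zero)
    have hj'n : ((j'.toNat : ℤ)) = j' := Int.toNat_of_nonneg hj'0
    refine hkmin j'.toNat (by omega) (by omega) ⟨z, hzc, hzne, ?_⟩
    have hpow : a ^ (j'.toNat : ℕ) = ((ua ^ j' : Dˣ) : D) := by
      rw [hvuaj, ← zpow_natCast a j'.toNat, hj'n]
    rw [hpow]
    exact he

end SkewLaurentAux

open SkewLaurentAux

/-- Let `D` be a division ring and `τ` an automorphism of `D` of finite inner order `m`,
with `τ^m` given by conjugation by `a ∈ D`, and let `k` be the smallest positive integer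
such that `τ (b * a^k) = b * a^k` for some non-zero central `b`. The skew Laurent
polynomial ring `R = D[t^{±1}; τ]` is axiomatized by a ring embedding `φ : D → R` and a
unit `t` with `t · φ d = φ (τ d) · t` and unique representation of elements as finite
sums `Σ φ (a i) * t ^ i`, `i : ℤ`. Then the center of `R` is the ordinary Laurent
polynomial ring `K^τ[(b a^k t^{km})^{±1}]`, i.e. it consists exactly of the finite sums
`Σ_r φ (z r) * s ^ r` (`r : ℤ`) where `s` is the unit `φ (b * a^k) * t^(k*m)` and each
`z r` is a `τ`-fixed central element of `D`. -/

theorem center_skewLaurent_of_finite_inner_order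
    (D R : Type) [DivisionRing D] [Ring R] (τ : RingAut D) (φ : D →+* R) (t : Rˣ)
    (hcomm : ∀ d : D, (t : R) * φ d = φ (τ d) * (t : R))
    (hbasis : ∀ x : R, ∃! a : ℤ →₀ D,
      x = a.sum fun i c => φ c * ((t ^ i : Rˣ) : R))
    (m : ℕ) (hm : 0 < m) (a : D) (ha : a ≠ 0)
    (hinner : ∀ d : D, (τ ^ m) d = a⁻¹ * d * a)
    (hmmin : ∀ j : ℕ, 0 < j → j < m →
      ¬ ∃ u : D, u ≠ 0 ∧ ∀ d : D, (τ ^ j) d = u⁻¹ * d * u)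
    (k : ℕ) (hk : 0 < k) (b : D) (hb : b ∈ Set.center D) (hbne : b ≠ 0)
    (hfix : τ (b * a ^ k) = b * a ^ k)
    (hkmin : ∀ j : ℕ, 0 < j → j < k →
      ¬ ∃ b' : D, b' ∈ Set.center D ∧ b' ≠ 0 ∧ τ (b' * a ^ j) = b' * a ^ j)
    (s : Rˣ) (hs : (s : R) = φ (b * a ^ k) * ((t ^ (k * m) : Rˣ) : R)) :
    Set.center R = {x : R | ∃ z : ℤ →₀ D,
      (∀ r : ℤ, z r ∈ Set.center D ∧ τ (z r) = z r) ∧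
      x = z.sum fun r c => φ c * ((s ^ r : Rˣ) : R)} := by
  classical
  have hinj : ∀ c₁ c₂ : ℤ →₀ D,
      (c₁.sum fun i cc => φ cc * ((t ^ i : Rˣ) : R))
        = (c₂.sum fun i cc => φ cc * ((t ^ i : Rˣ) : R)) → c₁ = c₂ := by
    intro c₁ c₂ h
    obtain ⟨d0, _, hun⟩ := hbasis (c₁.sum fun i cc => φ cc * ((t ^ i : Rˣ) : R))
    rw [hun c₁ rfl, hun c₂ h]
  have hakne : (a : D) ^ k ≠ 0 := pow_ne_zero k ha
  have hbak : b * a ^ k ≠ 0 := mul_ne_zero hbne hakne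
  have hbd : ∀ g : D, Commute g b := fun g => Semigroup.mem_center_iff.mp hb g
  have hfixpow : ∀ j : ℕ, (τ ^ j) (b * a ^ k) = b * a ^ k := by
    intro j
    induction j with
    | zero => rfl
    | succ jj ih => rw [pow_succ, ringAut_mul_apply, hfix, ih]
  set v : Dˣ := Units.mk0 (b * a ^ k) hbak with hv
  set uR : Rˣ := Units.map φ.toMonoidHom v with huR
  have huRval : (uR : R) = φ (b * a ^ k) := by simp [huR, hv]
  have hsu : s = uR * t ^ (k * m) := by
    apply Units.ext
    rw [Units.val_mul, hs, huRval]
  have hcomut : Commute uR (t ^ (k * m)) := by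
    have h1 := unit_pow_comm φ t τ hcomm (k * m) (b * a ^ k)
    rw [hfixpow (k * m)] at h1
    exact Units.ext (by rw [Units.val_mul, Units.val_mul, huRval, h1.symm])
  have hspow : ∀ n : ℤ, ((s ^ n : Rˣ) : R)
      = φ ((b * a ^ k) ^ n) * ((t ^ (n * ((k * m : ℕ) : ℤ)) : Rˣ) : R) := by
    intro n
    have h1 : (uR ^ n : Rˣ) = Units.map φ.toMonoidHom (v ^ n) := by rw [huR, map_zpow]
    have h2 : ((Units.map φ.toMonoidHom (v ^ n) : Rˣ) : R) = φ ((v ^ n : Dˣ) : D) := rfl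
    have h3 : ((v ^ n : Dˣ) : D) = (b * a ^ k) ^ n := Units.val_zpow_eq_zpow_val v n
    have h4 : ((t ^ (k * m) : Rˣ) : Rˣ) ^ n = t ^ (n * ((k * m : ℕ) : ℤ)) := by
      rw [← zpow_natCast t (k * m), ← zpow_mul, Int.mul_comm ((k * m : ℕ) : ℤ) n]
    rw [hsu, hcomut.mul_zpow n, Units.val_mul, h1, h2, h3, h4]
  have hconjk : ∀ d : D, (τ ^ (k * m)) d = (a ^ k)⁻¹ * d * a ^ k := by
    intro d
    have h0 := conj_zpow τ m a ha hinner (k : ℤ) d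
    have hcast : ((m : ℤ) * (k : ℤ)) = ((k * m : ℕ) : ℤ) := by push_cast; ring
    rw [hcast, zpow_natCast] at h0
    rw [h0, zpow_natCast]
  have hsd : ∀ d : D, Commute (φ d) (s : R) := by
    intro d
    have h1 := unit_pow_comm φ t τ hcomm (k * m) d
    have key : d * (b * a ^ k) = (b * a ^ k) * ((τ ^ (k * m)) d) := by
      rw [hconjk d]
      calc d * (b * a ^ k) = b * (d * a ^ k) := by
            rw [← mul_assoc, (hbd d).eq, mul_assoc]
        _ = (b * a ^ k) * ((a ^ k)⁻¹ * d * a ^ k) := by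
            simp [mul_assoc, mul_inv_cancel_left₀ hakne]
    show φ d * (s : R) = (s : R) * φ d
    calc φ d * (s : R) = φ (d * (b * a ^ k)) * ((t ^ (k * m) : Rˣ) : R) := by
          rw [hs, ← mul_assoc, ← map_mul]
      _ = φ (b * a ^ k) * (φ ((τ ^ (k * m)) d) * ((t ^ (k * m) : Rˣ) : R)) := by
          rw [key, map_mul, mul_assoc]
      _ = φ (b * a ^ k) * (((t ^ (k * m) : Rˣ) : R) * φ d) := by rw [← h1]
      _ = (s : R) * φ d := by rw [hs, mul_assoc]
  have hst : Commute (t : R) (s : R) := by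
    show (t : R) * (s : R) = (s : R) * (t : R)
    calc (t : R) * (s : R) = φ (τ (b * a ^ k)) * ((t : R) * ((t ^ (k * m) : Rˣ) : R)) := by
          rw [hs, ← mul_assoc, hcomm, mul_assoc]
      _ = φ (b * a ^ k) * (((t ^ (k * m) : Rˣ) : R) * (t : R)) := by
          rw [hfix, ← Units.val_mul, ← Units.val_mul, ((Commute.refl t).pow_right (k * m)).eq]
      _ = (s : R) * (t : R) := by rw [hs, mul_assoc]
  have hzfix_t : ∀ zz : D, τ zz = zz → Commute (φ zz) (t : R) := by
    intro zz hzz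
    exact (show (t : R) * φ zz = φ zz * (t : R) by rw [hcomm zz, hzz]).symm
  apply Set.eq_of_subset_of_subset
  · -- hard direction
    intro x hx
    have hxc : ∀ g : R, g * x = x * g := fun g => Semigroup.mem_center_iff.mp hx g
    obtain ⟨c, hcx, -⟩ := hbasis x
    have hrel : ∀ (d : D) (i : ℤ), c i * (τ ^ i) d = d * c i := by
      intro d i
      set c₁ : ℤ →₀ D := Finsupp.onFinset c.support (fun i => c i * (τ ^ i) d)
        (fun i hi => Finsupp.mem_support_iff.mpr
          (fun h0 => hi (by simp only [h0, zero_mul]))) with hc₁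
      set c₂ : ℤ →₀ D := Finsupp.onFinset c.support (fun i => d * c i)
        (fun i hi => Finsupp.mem_support_iff.mpr
          (fun h0 => hi (by simp only [h0, mul_zero]))) with hc₂
      have e₁ : (c₁.sum fun i cc => φ cc * ((t ^ i : Rˣ) : R)) = x * φ d := by
        rw [hcx, Finsupp.sum_mul, hc₁,
          Finsupp.onFinset_sum _ (fun i => by rw [map_zero, zero_mul]), Finsupp.sum]
        apply Finset.sum_congr rfl
        intro i _
        rw [map_mul, mul_assoc, ← unit_zpow_comm φ t τ hcomm i d, mul_assoc]
      have e₂ : (c₂.sum fun i cc => φ cc * ((t ^ i : Rˣ) : R)) = φ d * x := by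
        rw [hcx, Finsupp.mul_sum, hc₂,
          Finsupp.onFinset_sum _ (fun i => by rw [map_zero, zero_mul]), Finsupp.sum]
        apply Finset.sum_congr rfl
        intro i _
        rw [map_mul, mul_assoc]
      have h12 : c₁ = c₂ := by
        apply hinj
        rw [e₁, e₂]
        exact (hxc (φ d)).symm
      have := DFunLike.congr_fun h12 i
      simpa [hc₁, hc₂, Finsupp.onFinset_apply] using this
    have hfixc : ∀ i : ℤ, τ (c i) = c i := by
      set c₃ : ℤ →₀ D := Finsupp.onFinset c.support (fun i => τ (c i))
        (fun i hi => Finsupp.mem_support_iff.mpr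
          (fun h0 => hi (by simp only [h0, map_zero]))) with hc₃
      have e₃ : (c₃.sum fun i cc => φ cc * ((t ^ i : Rˣ) : R)) = x := by
        have step : ∀ i : ℤ, φ (τ (c i)) * ((t ^ i : Rˣ) : R)
            = (t : R) * (φ (c i) * ((t ^ i : Rˣ) : R)) * ((t⁻¹ : Rˣ) : R) := by
          intro i
          have htt : (t * t ^ i * t⁻¹ : Rˣ) = t ^ i := by
            rw [((Commute.refl t).zpow_right i).eq, mul_inv_cancel_right]
          calc φ (τ (c i)) * ((t ^ i : Rˣ) : R)
              = φ (τ (c i)) * ((t * t ^ i * t⁻¹ : Rˣ) : R) := by rw [htt]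
            _ = φ (τ (c i)) * ((t : R) * ((t ^ i : Rˣ) : R) * ((t⁻¹ : Rˣ) : R)) := by
                rw [Units.val_mul, Units.val_mul]
            _ = (t : R) * (φ (c i) * ((t ^ i : Rˣ) : R)) * ((t⁻¹ : Rˣ) : R) := by
                rw [← mul_assoc, ← mul_assoc, ← hcomm, mul_assoc ((t:R)) (φ (c i)), ← mul_assoc]
        rw [hc₃, Finsupp.onFinset_sum _ (fun i => by rw [map_zero, zero_mul])]
        calc ∑ i ∈ c.support, φ (τ (c i)) * ((t ^ i : Rˣ) : R)
            = ∑ i ∈ c.support, (t : R) * (φ (c i) * ((t ^ i : Rˣ) : R)) * ((t⁻¹ : Rˣ) : R) :=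
              Finset.sum_congr rfl (fun i _ => step i)
          _ = (t : R) * (∑ i ∈ c.support, φ (c i) * ((t ^ i : Rˣ) : R)) * ((t⁻¹ : Rˣ) : R) := by
              rw [Finset.mul_sum, Finset.sum_mul]
          _ = (t : R) * x * ((t⁻¹ : Rˣ) : R) := by rw [hcx]; rfl
          _ = x * ((t : R) * ((t⁻¹ : Rˣ) : R)) := by rw [hxc ((t : R)), mul_assoc]
          _ = x := by rw [← Units.val_mul, mul_inv_cancel, Units.val_one, mul_one]
      have h3c : c₃ = c := by
        apply hinj
        rw [e₃, hcx]
      intro i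
      have := DFunLike.congr_fun h3c i
      simpa [hc₃, Finsupp.onFinset_apply] using this
    have hkm0 : ((k * m : ℕ) : ℤ) ≠ 0 := by exact_mod_cast (Nat.mul_pos hk hm).ne'
    have hkey : ∀ i ∈ c.support, ∃ (n : ℤ) (z₀ : D), i = n * ((k * m : ℕ) : ℤ)
        ∧ z₀ ∈ Set.center D ∧ τ z₀ = z₀ ∧ z₀ ≠ 0 ∧ c i = z₀ * (b * a ^ k) ^ n :=
      fun i hi => key_coeff τ m hm a ha hinner hmmin k hk b hb hbne hfix hkmin i (c i)
        (Finsupp.mem_support_iff.mp hi) (hfixc i) (fun d => hrel d i)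
    set w : ℤ → D := fun r => c (r * ((k * m : ℕ) : ℤ)) * ((b * a ^ k) ^ r)⁻¹ with hwdef
    have hwsupp : ∀ r : ℤ, w r ≠ 0 →
        r ∈ c.support.image (fun i => i / ((k * m : ℕ) : ℤ)) := by
      intro r hr
      have h1 : c (r * ((k * m : ℕ) : ℤ)) ≠ 0 := by
        intro h0
        apply hr
        rw [hwdef]
        simp only [h0, zero_mul]
      exact Finset.mem_image.mpr ⟨r * ((k * m : ℕ) : ℤ), Finsupp.mem_support_iff.mpr h1,
        Int.mul_ediv_cancel r hkm0⟩
    refine ⟨Finsupp.onFinset _ w hwsupp, ?_, ?_⟩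
    · intro r
      rw [Finsupp.onFinset_apply]
      by_cases h0 : c (r * ((k * m : ℕ) : ℤ)) = 0
      · have hw0 : w r = 0 := by rw [hwdef]; simp only [h0, zero_mul]
        rw [hw0]
        exact ⟨Set.zero_mem_center, map_zero τ⟩
      · have hi : r * ((k * m : ℕ) : ℤ) ∈ c.support := Finsupp.mem_support_iff.mpr h0
        obtain ⟨n, z₀, hn, hzc, hzf, hz0, hceq⟩ := hkey _ hi
        have hnr : r = n := mul_right_cancel₀ hkm0 hn
        have hzr : w r = z₀ := by
          rw [hwdef]
          simp only []
          rw [hceq, hnr, mul_inv_cancel_right₀ (zpow_ne_zero n hbak)]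
        rw [hzr]
        exact ⟨hzc, hzf⟩
    · rw [hcx]
      have h1 : (Finsupp.onFinset _ w hwsupp).sum (fun r zr => φ zr * ((s ^ r : Rˣ) : R))
          = ∑ r ∈ c.support.image (fun i => i / ((k * m : ℕ) : ℤ)),
              φ (w r) * ((s ^ r : Rˣ) : R) :=
        Finsupp.onFinset_sum _ (fun r => by rw [map_zero, zero_mul])
      have h2 : ∑ r ∈ c.support.image (fun i => i / ((k * m : ℕ) : ℤ)),
            φ (w r) * ((s ^ r : Rˣ) : R)
          = ∑ i ∈ c.support, φ (w (i / ((k * m : ℕ) : ℤ)))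
              * ((s ^ (i / ((k * m : ℕ) : ℤ)) : Rˣ) : R) := by
        apply Finset.sum_image
        intro i1 hi1 i2 hi2 heq
        obtain ⟨n1, z1, hn1, -, -, -, -⟩ := hkey i1 hi1
        obtain ⟨n2, z2, hn2, -, -, -, -⟩ := hkey i2 hi2
        have e1 : i1 / ((k * m : ℕ) : ℤ) = n1 := by rw [hn1, Int.mul_ediv_cancel _ hkm0]
        have e2 : i2 / ((k * m : ℕ) : ℤ) = n2 := by rw [hn2, Int.mul_ediv_cancel _ hkm0]
        simp only [] at heq
        rw [e1, e2] at heq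
        rw [hn1, hn2, heq]
      have h3 : ∀ i ∈ c.support, φ (w (i / ((k * m : ℕ) : ℤ)))
            * ((s ^ (i / ((k * m : ℕ) : ℤ)) : Rˣ) : R)
          = φ (c i) * ((t ^ i : Rˣ) : R) := by
        intro i hi
        obtain ⟨n, z₀, hn, -, -, -, hceq⟩ := hkey i hi
        have e1 : i / ((k * m : ℕ) : ℤ) = n := by rw [hn, Int.mul_ediv_cancel _ hkm0]
        rw [e1]
        have hwn : w n = z₀ := by
          rw [hwdef]
          simp only []
          rw [← hn, hceq, mul_inv_cancel_right₀ (zpow_ne_zero n hbak)]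
        rw [hwn, hspow n, ← mul_assoc, ← map_mul, ← hceq, ← hn]
      rw [h1, h2, Finsupp.sum]
      exact (Finset.sum_congr rfl h3).symm
  · -- easy direction
    intro x hx
    obtain ⟨z, hz, hxz⟩ := hx
    rw [Semigroup.mem_center_iff]
    intro g
    have hterm : ∀ (dd : D) (ii : ℤ), Commute (φ dd * ((t ^ ii : Rˣ) : R)) x := by
      intro dd ii
      rw [hxz, Finsupp.sum]
      apply Commute.sum_right
      intro r _
      have A : Commute (φ dd) (φ (z r)) := by
        have h0 := Semigroup.mem_center_iff.mp (hz r).1 dd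
        show φ dd * φ (z r) = φ (z r) * φ dd
        rw [← map_mul, ← map_mul, h0]
      have B : Commute (φ dd) ((s ^ r : Rˣ) : R) := commute_unit_zpow (hsd dd) r
      have C : Commute ((t ^ ii : Rˣ) : R) (φ (z r)) :=
        (commute_unit_zpow (hzfix_t (z r) (hz r).2) ii).symm
      have Dm : Commute ((t ^ ii : Rˣ) : R) ((s ^ r : Rˣ) : R) :=
        (commute_unit_zpow (commute_unit_zpow hst r).symm ii).symm
      exact (A.mul_right B).mul_left (C.mul_right Dm)
    obtain ⟨dc, hdc, -⟩ := hbasis g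
    rw [hdc, Finsupp.sum_mul, Finsupp.mul_sum]
    apply Finsupp.sum_congr
    intro i _
    exact (hterm (dc i) i).eq
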